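/- Let p ≥ 2 be an integer and let w₀ = (1/p, …, 1/p) ∈ ℝ^p. Let w' ∈ ℝ^p be a fixed vector with Σᵢ |w'ᵢ| = 1, w' ≠ w₀, and w' ≠ −w₀. Then Q(w',r) → +∞ as r → 1 from the left (with r ranging in (0,1)); that is, among all normalized group effects, only the average group effect (up to overall sign) has an estimator whose variance remains bounded as the multicollinearity level approaches its extreme. -/

import Mathlib

open Matrix Filter Topology

/-- The `p × p` Gram/correlation matrix of a uniform model at multicollinearity
level `r`: diagonal entries `1`, off-diagonal entries `r`. -/
noncomputable def unifMat (p : ℕ) (r : ℝ) : Matrix (Fin p) (Fin p) ℝ :=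
  fun i j => if i = j then 1 else r

/-- `Q(w,r) = wᵀ A(p,r)⁻¹ w`. -/
noncomputable def Qform (p : ℕ) (r : ℝ) (w : Fin p → ℝ) : ℝ :=
  w ⬝ᵥ (unifMat p r)⁻¹.mulVec w

lemma unifMat_inv (p : ℕ) (hp : 2 ≤ p) (r : ℝ) (hr : r ∈ Set.Ioo (0:ℝ) 1) :
    (unifMat p r)⁻¹ = Matrix.of fun i j =>
      (if i = j then (1-r)⁻¹ else 0) + (-r / ((1-r)*(1+((p:ℝ)-1)*r))) := by
  have h1 : (1:ℝ) - r ≠ 0 := by nlinarith [hr.1, hr.2]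
  have h2 : (1:ℝ) + ((p:ℝ)-1)*r ≠ 0 := by
    have : (2:ℝ) ≤ p := by exact_mod_cast hp
    nlinarith [hr.1, hr.2]
  have h2' : (1:ℝ) - r + r * p ≠ 0 := by intro h; apply h2; linarith
  apply Matrix.inv_eq_right_inv
  set β : ℝ := -r / ((1-r)*(1+((p:ℝ)-1)*r)) with hβ
  ext i k
  simp only [Matrix.mul_apply, Matrix.of_apply, unifMat, mul_add, Finset.sum_add_distrib]
  have hrow : (∑ j : Fin p, (if i = j then (1:ℝ) else r) * β)
      = (1 + ((p:ℝ)-1)*r) * β := by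
    rw [← Finset.sum_mul]
    congr 1
    have : ∀ j : Fin p, (if i = j then (1:ℝ) else r) = r + (if i = j then 1 - r else 0) := by
      intro j; split <;> ring
    simp only [this, Finset.sum_add_distrib, Finset.sum_const, Finset.card_univ,
      Fintype.card_fin, nsmul_eq_mul, Finset.sum_ite_eq, Finset.mem_univ, if_true]
    ring
  rw [hrow]
  have hfirst : (∑ j : Fin p, (if i = j then (1:ℝ) else r) * (if j = k then (1-r)⁻¹ else 0))
      = (if i = k then (1:ℝ) else r) * (1-r)⁻¹ := by
    rw [Finset.sum_eq_single k]
    · simp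
    · intro j _ hj; simp [hj]
    · simp
  rw [hfirst]
  rcases eq_or_ne i k with h | h
  · subst h
    rw [Matrix.one_apply_eq, if_pos rfl, hβ]
    field_simp
    ring_nf
    field_simp
    ring
  · rw [Matrix.one_apply_ne h, if_neg h, hβ]
    field_simp
    ring_nf
    field_simp
    ring

lemma Qform_eq (p : ℕ) (hp : 2 ≤ p) (r : ℝ) (hr : r ∈ Set.Ioo (0:ℝ) 1) (w : Fin p → ℝ) :
    Qform p r w
      = ((∑ i, w i ^ 2) - r * (∑ i, w i)^2 / (1+((p:ℝ)-1)*r)) * (1-r)⁻¹ := by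
  have h1 : (1:ℝ) - r ≠ 0 := by nlinarith [hr.1, hr.2]
  have h2 : (1:ℝ) + ((p:ℝ)-1)*r ≠ 0 := by
    have : (2:ℝ) ≤ p := by exact_mod_cast hp
    nlinarith [hr.1, hr.2]
  set β : ℝ := -r / ((1-r)*(1+((p:ℝ)-1)*r)) with hβ
  rw [Qform, unifMat_inv p hp r hr]
  simp only [Matrix.mulVec, dotProduct, Matrix.of_apply]
  have inner : ∀ i, (∑ j, (((if i = j then (1-r)⁻¹ else 0) + β) * w j))
      = (1-r)⁻¹ * w i + β * ∑ j, w j := by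
    intro i
    simp [add_mul, Finset.sum_add_distrib, ite_mul, Finset.sum_ite_eq, Finset.mul_sum]
  rw [Finset.sum_congr rfl fun i _ => by rw [inner i]]
  have expand : ∑ i, w i * ((1-r)⁻¹ * w i + β * ∑ j, w j)
      = (1-r)⁻¹ * (∑ i, w i ^ 2) + β * (∑ i, w i)^2 := by
    simp only [mul_add, Finset.sum_add_distrib, ← Finset.sum_mul]
    congr 1
    · rw [Finset.mul_sum]; apply Finset.sum_congr rfl; intros; ring
    · ring
  rw [expand, hβ]
  field_simp
  ring

/-- for any fixed weight vector `w'` with `Σᵢ |w'ᵢ| = 1` that is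
not `±w₀ = ±(1/p, …, 1/p)`, the variance `Q(w',r)` tends to `+∞` as `r → 1⁻`
(with `r` ranging in `(0,1)`); only the average group effect (up to sign) stays
bounded. -/
theorem variance_diverges_off_average_l1 (p : ℕ) (hp : 2 ≤ p) (w' : Fin p → ℝ)
    (hw1 : (∑ i, |w' i|) = 1)
    (hne : w' ≠ fun _ => 1 / (p : ℝ))
    (hne' : w' ≠ fun _ => -(1 / (p : ℝ))) :
    Tendsto (fun r : ℝ => Qform p r w') (𝓝[Set.Ioo (0 : ℝ) 1] 1) atTop := by
  have hp0 : 0 < p := by omega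
  have hpne : (p:ℝ) ≠ 0 := by positivity
  set s : ℝ := ∑ i, w' i with hs
  set S : ℝ := ∑ i, w' i ^ 2 with hS
  -- w' is not constant equal to s/p
  have hnc : ∃ i, w' i ≠ s / p := by
    by_contra h
    push_neg at h
    have hconst : w' = fun _ => s / p := funext h
    have habs : |s / p| = 1 / p := by
      have : (∑ i : Fin p, |s / (p:ℝ)|) = 1 := by rw [← hw1]; congr 1; ext i; rw [h i]
      rw [Finset.sum_const, Finset.card_univ, Fintype.card_fin, nsmul_eq_mul] at this
      field_simp at this ⊢
      linarith [this]
    rcases abs_eq (by positivity : (0:ℝ) ≤ 1 / p) |>.mp habs with h' | h'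
    · exact hne (hconst.trans (by ext i; simp [h']))
    · exact hne' (hconst.trans (by ext i; simp [h']))
  -- c > 0
  have hc_eq : ∑ i, (w' i - s / p) ^ 2 = S - s ^ 2 / p := by
    have : ∀ i, (w' i - s / p) ^ 2 = w' i ^ 2 - 2 * (s/p) * w' i + (s/p)^2 := by
      intro i; ring
    simp only [this, Finset.sum_add_distrib, Finset.sum_sub_distrib, ← Finset.mul_sum,
      Finset.sum_const, Finset.card_univ, Fintype.card_fin, nsmul_eq_mul, ← hs, ← hS]
    field_simp
    ring
  have hc_pos : 0 < S - s ^ 2 / p := by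
    rw [← hc_eq]
    obtain ⟨i0, hi0⟩ := hnc
    have hne0 : w' i0 - s / p ≠ 0 := sub_ne_zero.mpr hi0
    have h1 : 0 < (w' i0 - s / p) ^ 2 := by positivity
    have h2 : (w' i0 - s / p) ^ 2 ≤ ∑ i, (w' i - s / p) ^ 2 :=
      Finset.single_le_sum (f := fun i => (w' i - s / (p:ℝ)) ^ 2)
        (fun i _ => sq_nonneg _) (Finset.mem_univ i0)
    linarith
  -- limit of the numerator
  have hden : ((1:ℝ) + ((p:ℝ)-1)*1) ≠ 0 := by
    have : (2:ℝ) ≤ p := by exact_mod_cast hp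
    nlinarith
  have hnum : Tendsto (fun r : ℝ => S - r * s ^ 2 / (1 + ((p:ℝ)-1)*r))
      (𝓝[Set.Ioo (0:ℝ) 1] 1) (𝓝 (S - s ^ 2 / p)) := by
    have hcont : Tendsto (fun r : ℝ => S - r * s ^ 2 / (1 + ((p:ℝ)-1)*r))
        (𝓝 (1:ℝ)) (𝓝 (S - 1 * s ^ 2 / (1 + ((p:ℝ)-1)*1))) := by
      apply Tendsto.sub tendsto_const_nhds
      exact Tendsto.div (tendsto_id.mul tendsto_const_nhds)
        (tendsto_const_nhds.add (tendsto_const_nhds.mul tendsto_id)) hden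
    have heq : S - 1 * s ^ 2 / (1 + ((p:ℝ)-1)*1) = S - s ^ 2 / p := by
      congr 1
      rw [one_mul]
      congr 1
      ring
    rw [heq] at hcont
    exact hcont.mono_left nhdsWithin_le_nhds
  -- (1-r)⁻¹ → ∞
  have hinv : Tendsto (fun r : ℝ => (1 - r)⁻¹) (𝓝[Set.Ioo (0:ℝ) 1] 1) atTop := by
    apply tendsto_inv_nhdsGT_zero.comp
    apply tendsto_nhdsWithin_of_tendsto_nhds_of_eventually_within
    · have : Tendsto (fun r : ℝ => 1 - r) (𝓝 1) (𝓝 (1 - 1)) :=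
        tendsto_const_nhds.sub tendsto_id
      simpa using this.mono_left nhdsWithin_le_nhds
    · filter_upwards [eventually_mem_nhdsWithin] with r hr
      exact sub_pos.mpr hr.2
  have key : Tendsto (fun r : ℝ => (S - r * s ^ 2 / (1 + ((p:ℝ)-1)*r)) * (1 - r)⁻¹)
      (𝓝[Set.Ioo (0:ℝ) 1] 1) atTop :=
    Tendsto.pos_mul_atTop hc_pos hnum hinv
  apply key.congr'
  filter_upwards [eventually_mem_nhdsWithin] with r hr
  exact (Qform_eq p hp r hr w').symm
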